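/- Let Γ be a graph with vertex set S, V ⊆ S, and let A, B ⊆ V be such that A separates two vertices b₁, b₂ of B in Γ, where B = {b₁,b₂} ∪ M with b₁, b₂ non-adjacent, every vertex of M adjacent to both b₁ and b₂ (so M ⊆ A by the adjacency lemma), and assume {b₁} ∪ M does not separate V in Γ and {b₂} ∪ M does not separate V in Γ. If B does not separate the set A in Γ (i.e., A − M lies in one component K of Γ − B), then every component of Γ − B meeting V nontrivially, other than K, leads to a contradiction; hence B separates A in Γ whenever B separates V into at least two components meeting V. -/

import Mathlib

/-- `X` separates the vertices `y` and `z` in `Γ`: neither lies in `X` and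
every walk from `y` to `z` meets `X`. -/
def SeparatesVerts {S : Type*} (Γ : SimpleGraph S) (X : Set S) (y z : S) : Prop :=
  y ∉ X ∧ z ∉ X ∧ ∀ w : Γ.Walk y z, ∃ v ∈ w.support, v ∈ X

/-- `X` separates the set `Y` in `Γ`: some two vertices of `Y − X` are
separated by `X`. -/
def SeparatesSet {S : Type*} (Γ : SimpleGraph S) (X Y : Set S) : Prop :=
  ∃ y ∈ Y, ∃ z ∈ Y, SeparatesVerts Γ X y z

/-- From a walk `w : y → z` whose support avoids `X`, with `b ∈ w.support`,
`B ⊆ X ∪ {b}`, `b ∈ B`, `y ∉ B`: extract a neighbor `u` of `b` and a walk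
`u → y` avoiding `B` entirely. -/
lemma neighbor_aux {S : Type*} [DecidableEq S] (Γ : SimpleGraph S) (B X : Set S) (b : S)
    (hbB : b ∈ B) {y z : S} (hyB : y ∉ B)
    (w : Γ.Walk y z) (hwX : ∀ v ∈ w.support, v ∉ X)
    (hb : b ∈ w.support) (hXB : B ⊆ X ∪ {b}) :
    ∃ u, Γ.Adj b u ∧ ∃ q : Γ.Walk u y, ∀ x ∈ q.support, x ∉ B := by
  have hby : b ≠ y := fun h => hyB (h ▸ hbB)
  set p := w.takeUntil b hb with hp
  have hpsub : ∀ x ∈ p.support, x ∈ w.support := fun x hx => w.support_takeUntil_subset hb hx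
  have hcount : p.support.count b = 1 := w.count_support_takeUntil_eq_one hb
  have hrsub : ∀ x ∈ p.reverse.support, x ∈ w.support := by
    intro x hx
    rw [SimpleGraph.Walk.support_reverse, List.mem_reverse] at hx
    exact hpsub x hx
  have hrcount : p.reverse.support.count b = 1 := by
    rw [SimpleGraph.Walk.support_reverse, List.count_reverse]; exact hcount
  cases hpr : p.reverse with
  | nil => exact absurd rfl hby
  | cons h q =>
    refine ⟨_, h, q, ?_⟩
    intro x hx hxB
    have hxp : x ∈ p.reverse.support := by
      rw [hpr, SimpleGraph.Walk.support_cons]; exact List.mem_cons_of_mem _ hx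
    have hxX : x ∉ X := hwX x (hrsub x hxp)
    have hxb : x ≠ b := by
      rintro rfl
      have : p.reverse.support.count x ≥ 2 := by
        rw [hpr, SimpleGraph.Walk.support_cons, List.count_cons_self]
        have : 1 ≤ q.support.count x := List.one_le_count_iff.mpr hx
        omega
      omega
    rcases hXB hxB with h' | h'
    · exact hxX h'
    · exact hxb h'

/-- If every `b₁ → b₂` walk meets `A`, `b₁, b₂ ∉ A`, and we have neighbors
`u` of `b₁` and `v` of `b₂` joined to `t` by walks avoiding `B`, then some
vertex of `A` outside `B` is joined to `t` by a walk avoiding `B`. -/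
lemma conn_to_A {S : Type*} [DecidableEq S] (Γ : SimpleGraph S) (A B : Set S) (b₁ b₂ : S)
    (hb1A : b₁ ∉ A) (hb2A : b₂ ∉ A)
    (hsepw : ∀ w : Γ.Walk b₁ b₂, ∃ v ∈ w.support, v ∈ A)
    {t u v : S} (h1 : Γ.Adj b₁ u) (h2 : Γ.Adj b₂ v)
    (q1 : Γ.Walk u t) (q2 : Γ.Walk v t)
    (hq1 : ∀ x ∈ q1.support, x ∉ B) (hq2 : ∀ x ∈ q2.support, x ∉ B) :
    ∃ a ∈ A, a ∉ B ∧ ∃ q : Γ.Walk a t, ∀ x ∈ q.support, x ∉ B := by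
  set W : Γ.Walk b₁ b₂ := (SimpleGraph.Walk.cons h1 (q1.append q2.reverse)).concat h2.symm with hW
  obtain ⟨a, haW, haA⟩ := hsepw W
  have hmem : a = b₁ ∨ a ∈ q1.support ∨ a ∈ q2.support ∨ a = b₂ := by
    rw [hW] at haW
    rw [SimpleGraph.Walk.support_concat, List.mem_append,
      SimpleGraph.Walk.support_cons, List.mem_cons] at haW
    rcases haW with (h' | h') | h'
    · exact Or.inl h'
    · rw [SimpleGraph.Walk.support_append, List.mem_append] at h'
      rcases h' with h' | h'
      · exact Or.inr (Or.inl h')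
      · refine Or.inr (Or.inr (Or.inl ?_))
        have := List.mem_of_mem_tail h'
        rw [SimpleGraph.Walk.support_reverse, List.mem_reverse] at this
        exact this
    · simp at h'
      exact Or.inr (Or.inr (Or.inr h'))
  rcases hmem with rfl | h' | h' | rfl
  · exact absurd haA hb1A
  · exact ⟨a, haA, hq1 a h', q1.dropUntil a h', fun x hx =>
      hq1 x (q1.support_dropUntil_subset h' hx)⟩
  · exact ⟨a, haA, hq2 a h', q2.dropUntil a h', fun x hx =>
      hq2 x (q2.support_dropUntil_subset h' hx)⟩
  · exact absurd haA hb2A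

/-- If `A` separates `b₁` from `b₂` in `Γ`, where `B = {b₁,b₂} ∪ M` with
`b₁, b₂` non-adjacent and every vertex of `M` adjacent to both (so `M ⊆ A`),
neither `{b₁} ∪ M` nor `{b₂} ∪ M` separates `V`, and `B` separates `V`, then
`B` separates `A` in `Γ`. -/
theorem separates_symm_for_crossing {S : Type*} (Γ : SimpleGraph S)
    (V A B M : Set S) (b₁ b₂ : S)
    (hAV : A ⊆ V) (hBV : B ⊆ V)
    (hB : B = {b₁, b₂} ∪ M) (hne : b₁ ≠ b₂) (hnadj : ¬ Γ.Adj b₁ b₂)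
    (hMadj : ∀ m ∈ M, Γ.Adj m b₁ ∧ Γ.Adj m b₂)
    (hMA : M ⊆ A)
    (hsep : SeparatesVerts Γ A b₁ b₂)
    (hn1 : ¬ SeparatesSet Γ ({b₁} ∪ M) V)
    (hn2 : ¬ SeparatesSet Γ ({b₂} ∪ M) V)
    (hVsep : SeparatesSet Γ B V) :
    SeparatesSet Γ B A := by
  classical
  obtain ⟨y, hyV, z, hzV, hyB, hzB, hyz⟩ := hVsep
  have hb1B : b₁ ∈ B := by rw [hB]; left; left; rfl
  have hb2B : b₂ ∈ B := by rw [hB]; left; right; rfl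
  have hX1B : ({b₁} ∪ M : Set S) ⊆ B := by
    rw [hB]; rintro x (h | h)
    · exact Or.inl (Or.inl h)
    · exact Or.inr h
  have hX2B : ({b₂} ∪ M : Set S) ⊆ B := by
    rw [hB]; rintro x (h | h)
    · exact Or.inl (Or.inr h)
    · exact Or.inr h
  have hBX1 : B ⊆ ({b₁} ∪ M : Set S) ∪ {b₂} := by
    rw [hB]; rintro x ((h | h) | h)
    · exact Or.inl (Or.inl h)
    · exact Or.inr h
    · exact Or.inl (Or.inr h)
  have hBX2 : B ⊆ ({b₂} ∪ M : Set S) ∪ {b₁} := by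
    rw [hB]; rintro x ((h | h) | h)
    · exact Or.inr h
    · exact Or.inl (Or.inl h)
    · exact Or.inl (Or.inr h)
  -- walks avoiding {b₁} ∪ M and {b₂} ∪ M
  have get : ∀ (X : Set S), ¬ SeparatesSet Γ X V → X ⊆ B →
      ∃ w : Γ.Walk y z, ∀ v ∈ w.support, v ∉ X := by
    intro X hn hXB
    by_contra h
    push_neg at h
    refine hn ⟨y, hyV, z, hzV, fun h' => hyB (hXB h'), fun h' => hzB (hXB h'), ?_⟩
    intro w
    obtain ⟨v, hv, hv'⟩ := h w
    exact ⟨v, hv, hv'⟩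
  obtain ⟨w₁, hw₁⟩ := get _ hn1 hX1B
  obtain ⟨w₂, hw₂⟩ := get _ hn2 hX2B
  -- w₁ must pass through b₂, w₂ through b₁
  have hb2w₁ : b₂ ∈ w₁.support := by
    obtain ⟨v, hv, hvB⟩ := hyz w₁
    have := hw₁ v hv
    rw [hB] at hvB
    rcases hvB with (h | h) | h
    · exact absurd (Or.inl h) this
    · exact h ▸ hv
    · exact absurd (Or.inr h) this
  have hb1w₂ : b₁ ∈ w₂.support := by
    obtain ⟨v, hv, hvB⟩ := hyz w₂
    have := hw₂ v hv
    rw [hB] at hvB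
    rcases hvB with (h | h) | h
    · exact h ▸ hv
    · exact absurd (Or.inl h) this
    · exact absurd (Or.inr h) this
  have hb2w₁' : b₂ ∈ w₁.reverse.support := by
    rw [SimpleGraph.Walk.support_reverse, List.mem_reverse]; exact hb2w₁
  have hb1w₂' : b₁ ∈ w₂.reverse.support := by
    rw [SimpleGraph.Walk.support_reverse, List.mem_reverse]; exact hb1w₂
  have hw₁' : ∀ v ∈ w₁.reverse.support, v ∉ ({b₁} ∪ M : Set S) := by
    intro v hv
    rw [SimpleGraph.Walk.support_reverse, List.mem_reverse] at hv
    exact hw₁ v hv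
  have hw₂' : ∀ v ∈ w₂.reverse.support, v ∉ ({b₂} ∪ M : Set S) := by
    intro v hv
    rw [SimpleGraph.Walk.support_reverse, List.mem_reverse] at hv
    exact hw₂ v hv
  -- neighbors of b₂ and b₁ connected to y and to z avoiding B
  obtain ⟨uy2, huy2, qy2, hqy2⟩ := neighbor_aux Γ B _ b₂ hb2B hyB w₁ hw₁ hb2w₁ hBX1
  obtain ⟨uz2, huz2, qz2, hqz2⟩ := neighbor_aux Γ B _ b₂ hb2B hzB w₁.reverse hw₁' hb2w₁' hBX1
  obtain ⟨uy1, huy1, qy1, hqy1⟩ := neighbor_aux Γ B _ b₁ hb1B hyB w₂ hw₂ hb1w₂ hBX2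
  obtain ⟨uz1, huz1, qz1, hqz1⟩ := neighbor_aux Γ B _ b₁ hb1B hzB w₂.reverse hw₂' hb1w₂' hBX2
  -- vertices of A connected to y and to z avoiding B
  obtain ⟨a₁, ha₁A, ha₁B, p₁, hp₁⟩ :=
    conn_to_A Γ A B b₁ b₂ hsep.1 hsep.2.1 hsep.2.2 huy1 huy2 qy1 qy2 hqy1 hqy2
  obtain ⟨a₂, ha₂A, ha₂B, p₂, hp₂⟩ :=
    conn_to_A Γ A B b₁ b₂ hsep.1 hsep.2.1 hsep.2.2 huz1 huz2 qz1 qz2 hqz1 hqz2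
  refine ⟨a₁, ha₁A, a₂, ha₂A, ha₁B, ha₂B, ?_⟩
  intro w
  by_contra h
  push_neg at h
  have h' : ∀ v ∈ w.support, v ∉ B := fun v hv => h v hv
  -- build a walk y → z avoiding B, contradiction
  set W : Γ.Walk y z := p₁.reverse.append (w.append p₂) with hW
  obtain ⟨v, hv, hvB⟩ := hyz W
  rw [hW, SimpleGraph.Walk.support_append, List.mem_append] at hv
  rcases hv with hv | hv
  · rw [SimpleGraph.Walk.support_reverse, List.mem_reverse] at hv
    exact hp₁ v hv hvB
  · have hv' := List.mem_of_mem_tail hv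
    rw [SimpleGraph.Walk.support_append, List.mem_append] at hv'
    rcases hv' with hv' | hv'
    · exact h' v hv' hvB
    · exact hp₂ v (List.mem_of_mem_tail hv') hvB
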